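/- Let r ≥ 3 and n ∈ ℕ, and let G be an r-partite graph on parts (V_1,...,V_r) of size n with minimum cross-degree at least (1 − δ)n where 0 ≤ δ ≤ 1/(2r). Then the number k of r-cliques of G satisfies k ≥ (1 − δr)^{r-1} n^r ≥ n^r/2^{r-1}; in particular k > 0, so G contains at least one copy of K_r. -/

import Mathlib

open Finset
open scoped Classical

private noncomputable def Bset {V : Type*} [Fintype V] (r : ℕ) (G : SimpleGraph V) (P : V → Fin r)
    (v₀ : V) (m : ℕ) : Finset (Fin r → V) :=
  Finset.univ.filter (fun f =>
    (∀ i : Fin r, ((i : ℕ) < m → P (f i) = i) ∧ (m ≤ (i : ℕ) → f i = v₀)) ∧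
    ∀ i j : Fin r, (i : ℕ) < m → (j : ℕ) < m → i ≠ j → G.Adj (f i) (f j))

private lemma mem_Bset {V : Type*} [Fintype V] {r : ℕ} {G : SimpleGraph V} {P : V → Fin r}
    {v₀ : V} {m : ℕ} {f : Fin r → V} :
    f ∈ Bset r G P v₀ m ↔
      (∀ i : Fin r, ((i : ℕ) < m → P (f i) = i) ∧ (m ≤ (i : ℕ) → f i = v₀)) ∧
      ∀ i j : Fin r, (i : ℕ) < m → (j : ℕ) < m → i ≠ j → G.Adj (f i) (f j) := by
  simp [Bset]

private lemma step_count {V : Type*} [Fintype V] [DecidableEq V] {r n : ℕ}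
    {δ : ℝ} {G : SimpleGraph V} {P : V → Fin r}
    (hsize : ∀ i : Fin r, (Finset.univ.filter fun v => P v = i).card = n)
    (hdeg : ∀ (j : Fin r) (v : V), P v ≠ j →
      (1 - δ) * n ≤ ((Finset.univ.filter fun u => P u = j ∧ G.Adj v u).card : ℝ))
    (v₀ : V) (m : ℕ) (hm : m < r) :
    ((Bset r G P v₀ m).card : ℝ) * ((1 - m * δ) * n) ≤ ((Bset r G P v₀ (m+1)).card : ℝ) := by
  set jm : Fin r := ⟨m, hm⟩ with hjm
  have hjmval : (jm : ℕ) = m := rfl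
  have hmap : ∀ f ∈ Bset r G P v₀ (m+1), Function.update f jm v₀ ∈ Bset r G P v₀ m := by
    intro f hf
    rw [mem_Bset] at hf ⊢
    obtain ⟨h1, h2⟩ := hf
    refine ⟨fun i => ⟨fun hi => ?_, fun hi => ?_⟩, fun i j hi hj hij => ?_⟩
    · have hne : i ≠ jm := by
        intro h; rw [h, hjmval] at hi; omega
      rw [Function.update_of_ne hne]
      exact (h1 i).1 (by omega)
    · by_cases h : i = jm
      · rw [h, Function.update_self]
      · rw [Function.update_of_ne h]
        have : (i : ℕ) ≠ m := fun hh => h (Fin.ext (by rw [hh, hjmval]))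
        exact (h1 i).2 (by omega)
    · have hine : i ≠ jm := by intro h; rw [h, hjmval] at hi; omega
      have hjne : j ≠ jm := by intro h; rw [h, hjmval] at hj; omega
      rw [Function.update_of_ne hine, Function.update_of_ne hjne]
      exact h2 i j (by omega) (by omega) hij
  have hfiber : ∀ g ∈ Bset r G P v₀ m,
      (1 - m * δ) * n ≤
        (((Bset r G P v₀ (m+1)).filter fun f => Function.update f jm v₀ = g).card : ℝ) := by
    intro g hg
    rw [mem_Bset] at hg
    obtain ⟨hg1, hg2⟩ := hg
    have hgjm : g jm = v₀ := (hg1 jm).2 (by omega)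
    set Pm : Finset V := Finset.univ.filter fun v => P v = jm with hPmdef
    have hPmn : Pm.card = n := hsize jm
    set U : Finset V := Pm.filter (fun u => ∀ i : Fin r, (i : ℕ) < m → G.Adj (g i) u) with hUdef
    set W : Finset V := Pm.filter (fun u => ¬ ∀ i : Fin r, (i : ℕ) < m → G.Adj (g i) u) with hWdef
    have hsplit : U.card + W.card = n := by
      rw [hUdef, hWdef, ← hPmn]
      exact Finset.card_filter_add_card_filter_not _
    have hbad : ∀ i : Fin r, (i : ℕ) < m →
        ((Pm.filter fun u => ¬ G.Adj (g i) u).card : ℝ) ≤ δ * n := by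
      intro i hi
      have hPgi : P (g i) = i := (hg1 i).1 hi
      have hne : P (g i) ≠ jm := by
        rw [hPgi]; intro h; rw [h, hjmval] at hi; omega
      have hd := hdeg jm (g i) hne
      have hgood : (Finset.univ.filter fun u => P u = jm ∧ G.Adj (g i) u)
          = Pm.filter fun u => G.Adj (g i) u := by
        rw [hPmdef, Finset.filter_filter]
      rw [hgood] at hd
      have hsum : (Pm.filter fun u => G.Adj (g i) u).card
          + (Pm.filter fun u => ¬ G.Adj (g i) u).card = n := by
        rw [← hPmn]; exact Finset.card_filter_add_card_filter_not _
      have hsumR : ((Pm.filter fun u => G.Adj (g i) u).card : ℝ)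
          + ((Pm.filter fun u => ¬ G.Adj (g i) u).card : ℝ) = n := by exact_mod_cast hsum
      linarith
    have hWsub : W ⊆ (Finset.Iio jm).biUnion (fun i => Pm.filter fun u => ¬ G.Adj (g i) u) := by
      intro u hu
      rw [hWdef, Finset.mem_filter] at hu
      obtain ⟨hu1, hu2⟩ := hu
      push_neg at hu2
      obtain ⟨i, hi, hadj⟩ := hu2
      exact Finset.mem_biUnion.mpr ⟨i, Finset.mem_Iio.mpr (by rw [Fin.lt_def, hjmval]; exact hi),
        Finset.mem_filter.mpr ⟨hu1, hadj⟩⟩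
    have hWle : (W.card : ℝ) ≤ m * (δ * n) := by
      have h1 : W.card ≤ ∑ i ∈ Finset.Iio jm, (Pm.filter fun u => ¬ G.Adj (g i) u).card :=
        le_trans (Finset.card_le_card hWsub) Finset.card_biUnion_le
      have h2 : (∑ i ∈ Finset.Iio jm, ((Pm.filter fun u => ¬ G.Adj (g i) u).card : ℝ))
          ≤ ∑ _i ∈ Finset.Iio jm, (δ * n) := by
        apply Finset.sum_le_sum
        intro i hi
        have := Finset.mem_Iio.mp hi
        rw [Fin.lt_def, hjmval] at this
        exact hbad i this
      have h3 : (∑ _i ∈ Finset.Iio jm, (δ * n) : ℝ) = m * (δ * n) := by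
        rw [Finset.sum_const, Fin.card_Iio, hjmval, nsmul_eq_mul]
      have h1R : (W.card : ℝ) ≤ ∑ i ∈ Finset.Iio jm, ((Pm.filter fun u => ¬ G.Adj (g i) u).card : ℝ) := by
        push_cast
        exact_mod_cast h1
      linarith
    have hUcard : (1 - m * δ) * n ≤ (U.card : ℝ) := by
      have hsplitR : (U.card : ℝ) + (W.card : ℝ) = n := by exact_mod_cast hsplit
      nlinarith
    -- injection from U into the fiber
    have hinj : U.card ≤
        ((Bset r G P v₀ (m+1)).filter fun f => Function.update f jm v₀ = g).card := by
      apply Finset.card_le_card_of_injOn (fun u => Function.update g jm u)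
      · intro u hu
        rw [hUdef, Finset.mem_coe, Finset.mem_filter, hPmdef, Finset.mem_filter] at hu
        obtain ⟨⟨-, hu1⟩, hu2⟩ := hu
        simp only [Finset.mem_coe]
        rw [Finset.mem_filter]
        constructor
        · rw [mem_Bset]
          refine ⟨fun i => ⟨fun hi => ?_, fun hi => ?_⟩, fun i j hi hj hij => ?_⟩
          · by_cases h : i = jm
            · rw [h, Function.update_self, hu1]
            · have : (i : ℕ) ≠ m := fun hh => h (Fin.ext (by rw [hh, hjmval]))
              rw [Function.update_of_ne h]
              exact (hg1 i).1 (by omega)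
          · have h : i ≠ jm := by
              intro h; rw [h, hjmval] at hi; omega
            rw [Function.update_of_ne h]
            exact (hg1 i).2 (by omega)
          · by_cases h : i = jm
            · have hj' : j ≠ jm := fun hh => hij (by rw [h, hh])
              have hjm' : (j : ℕ) ≠ m := fun hh => hj' (Fin.ext (by rw [hh, hjmval]))
              rw [h, Function.update_self, Function.update_of_ne hj']
              exact (hu2 j (by omega)).symm
            · have him' : (i : ℕ) ≠ m := fun hh => h (Fin.ext (by rw [hh, hjmval]))
              rw [Function.update_of_ne h]
              by_cases h' : j = jm
              · rw [h', Function.update_self]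
                exact hu2 i (by omega)
              · have hjm' : (j : ℕ) ≠ m := fun hh => h' (Fin.ext (by rw [hh, hjmval]))
                rw [Function.update_of_ne h']
                exact hg2 i j (by omega) (by omega) hij
        · rw [Function.update_idem]
          conv_rhs => rw [← Function.update_eq_self jm g]
          rw [hgjm]
      · intro u hu u' hu' huu
        have := congrFun huu jm
        simpa using this
    calc (1 - m * δ) * n ≤ (U.card : ℝ) := hUcard
      _ ≤ _ := by exact_mod_cast hinj
  -- sum over fibers
  have hcardsum := Finset.card_eq_sum_card_fiberwise hmap
  have hle : (Bset r G P v₀ m).card • ((1 - m * δ) * n)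
      ≤ ∑ g ∈ Bset r G P v₀ m,
          (((Bset r G P v₀ (m+1)).filter fun f => Function.update f jm v₀ = g).card : ℝ) :=
    Finset.card_nsmul_le_sum _ _ _ hfiber
  rw [nsmul_eq_mul] at hle
  calc ((Bset r G P v₀ m).card : ℝ) * ((1 - m * δ) * n)
      ≤ ∑ g ∈ Bset r G P v₀ m,
          (((Bset r G P v₀ (m+1)).filter fun f => Function.update f jm v₀ = g).card : ℝ) := hle
    _ = ((Bset r G P v₀ (m+1)).card : ℝ) := by rw [hcardsum]; push_cast; rfl

/-- k ≥ (1 − δr)^{r−1} n^r ≥ n^r/2^{r−1}, so G has a copy of K_r. -/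
theorem stmt_8 {V : Type*} [Fintype V] [DecidableEq V] {r n : ℕ} (hr : 3 ≤ r) (hn : 0 < n)
    (δ : ℝ) (hδ0 : 0 ≤ δ) (hδ1 : δ ≤ 1 / (2 * r))
    (G : SimpleGraph V) (P : V → Fin r)
    (hpart : ∀ u v, G.Adj u v → P u ≠ P v)
    (hsize : ∀ i : Fin r, (Finset.univ.filter fun v => P v = i).card = n)
    (hdeg : ∀ (j : Fin r) (v : V), P v ≠ j →
      (1 - δ) * n ≤ ((Finset.univ.filter fun u => P u = j ∧ G.Adj v u).card : ℝ)) :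
    (n : ℝ) ^ r / 2 ^ (r - 1) ≤ (1 - δ * r) ^ (r - 1) * (n : ℝ) ^ r ∧
    (1 - δ * r) ^ (r - 1) * (n : ℝ) ^ r ≤ ((G.cliqueFinset r).card : ℝ) ∧
    0 < (G.cliqueFinset r).card := by
  have hr0 : 0 < r := by omega
  have hrR : (0:ℝ) < r := by exact_mod_cast hr0
  have hδr : δ * r ≤ 1/2 := by
    have h := mul_le_mul_of_nonneg_right hδ1 (le_of_lt hrR)
    have : (1 / (2 * (r:ℝ))) * r = 1/2 := by field_simp
    linarith
  have h2 : (1:ℝ)/2 ≤ 1 - δ * r := by linarith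
  have h2' : (0:ℝ) ≤ 1 - δ * r := by linarith
  obtain ⟨v₀, -⟩ : ∃ v : V, P v = ⟨0, hr0⟩ := by
    have h := hsize ⟨0, hr0⟩
    have hne : (Finset.univ.filter fun v => P v = (⟨0, hr0⟩ : Fin r)).Nonempty := by
      rw [← Finset.card_pos, h]; exact hn
    obtain ⟨v, hv⟩ := hne
    exact ⟨v, (Finset.mem_filter.mp hv).2⟩
  have hB0 : (Bset r G P v₀ 0).card = 1 := by
    have : Bset r G P v₀ 0 = {fun _ => v₀} := by
      ext f
      rw [mem_Bset, Finset.mem_singleton]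
      simp [funext_iff]
    rw [this, Finset.card_singleton]
  have hmain : ∀ m, m ≤ r → 1 ≤ m →
      (1 - δ * r) ^ (m-1) * (n:ℝ) ^ m ≤ ((Bset r G P v₀ m).card : ℝ) := by
    intro m
    induction m with
    | zero => intro _ h; omega
    | succ k ih =>
      intro hk1 _
      by_cases hk : k = 0
      · subst hk
        have hs := step_count hsize hdeg v₀ 0 hr0
        rw [hB0] at hs
        simpa using hs
      · have hk1' : 1 ≤ k := by omega
        have hkr : k ≤ r := by omega
        have hs := step_count hsize hdeg v₀ k (by omega)
        have hih := ih (by omega) hk1'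
        have hkk : (1 - δ * r) * (n:ℝ) ≤ (1 - k * δ) * n := by
          have hkR : (k:ℝ) ≤ r := by exact_mod_cast hkr
          have : (k:ℝ) * δ ≤ δ * r := by nlinarith
          nlinarith [Nat.cast_nonneg (α := ℝ) n]
        have hnn : (0:ℝ) ≤ (1 - δ * r) * n := by positivity
        have hbn : (0:ℝ) ≤ ((Bset r G P v₀ k).card : ℝ) := Nat.cast_nonneg _
        have hmul : ((1 - δ * r) ^ (k-1) * (n:ℝ) ^ k) * ((1 - δ * r) * n)
            ≤ ((Bset r G P v₀ k).card : ℝ) * ((1 - k * δ) * n) :=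
          mul_le_mul hih hkk hnn hbn
        obtain ⟨k', rfl⟩ : ∃ k', k = k' + 1 := ⟨k - 1, by omega⟩
        have heq : ((1 - δ * r) ^ (k'+1-1) * (n:ℝ) ^ (k'+1)) * ((1 - δ * r) * n)
            = (1 - δ * r) ^ (k'+1+1-1) * (n:ℝ) ^ (k'+1+1) := by
          simp only [Nat.add_sub_cancel]
          rw [pow_succ (1 - δ * r) k', pow_succ (n:ℝ) (k'+1)]
          ring
        rw [heq] at hmul
        exact le_trans hmul hs
  have hclique : (Bset r G P v₀ r).card ≤ (G.cliqueFinset r).card := by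
    apply Finset.card_le_card_of_injOn (fun f => Finset.image f Finset.univ)
    · intro f hf
      rw [Finset.mem_coe, mem_Bset] at hf
      obtain ⟨h1, hadj⟩ := hf
      have hfinj : Function.Injective f := by
        intro i j hij
        have hPij : P (f i) = P (f j) := by rw [hij]
        rw [(h1 i).1 i.isLt, (h1 j).1 j.isLt] at hPij
        exact hPij
      simp only [Finset.mem_coe]
      rw [SimpleGraph.mem_cliqueFinset_iff]
      constructor
      · intro u hu v hv huv
        simp only [Finset.coe_image, Set.mem_image, Finset.coe_univ, Set.mem_univ,
          true_and] at hu hv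
        obtain ⟨i, rfl⟩ := hu
        obtain ⟨j, rfl⟩ := hv
        exact hadj i j i.isLt j.isLt (fun h => huv (by rw [h]))
      · rw [Finset.card_image_of_injective _ hfinj, Finset.card_univ, Fintype.card_fin]
    · intro f hf f' hf' hff
      rw [Finset.mem_coe, mem_Bset] at hf hf'
      funext i
      have hff' : Finset.image f Finset.univ = Finset.image f' Finset.univ := hff
      have hmem : f' i ∈ Finset.image f Finset.univ := by
        rw [hff']; exact Finset.mem_image_of_mem _ (Finset.mem_univ i)
      obtain ⟨j, -, hj⟩ := Finset.mem_image.mp hmem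
      have hPj : P (f j) = j := (hf.1 j).1 j.isLt
      have hPi : P (f' i) = i := (hf'.1 i).1 i.isLt
      rw [hj, hPi] at hPj
      rw [← hj, hPj]
  have hkey : (1 - δ * r) ^ (r-1) * (n:ℝ) ^ r ≤ ((G.cliqueFinset r).card : ℝ) := by
    refine le_trans (hmain r le_rfl (by omega)) ?_
    exact_mod_cast hclique
  have hfirst : (n:ℝ) ^ r / 2 ^ (r-1) ≤ (1 - δ * r) ^ (r-1) * (n:ℝ) ^ r := by
    have hhalf : ((1:ℝ)/2) ^ (r-1) ≤ (1 - δ * r) ^ (r-1) :=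
      pow_le_pow_left₀ (by norm_num) h2 _
    have hn0 : (0:ℝ) ≤ (n:ℝ) ^ r := by positivity
    have heq : (n:ℝ) ^ r / 2 ^ (r-1) = ((1:ℝ)/2) ^ (r-1) * (n:ℝ) ^ r := by
      rw [div_pow]; ring
    rw [heq]
    exact mul_le_mul_of_nonneg_right hhalf hn0
  have hpos : 0 < (G.cliqueFinset r).card := by
    have hp : (0:ℝ) < (n:ℝ) ^ r / 2 ^ (r-1) := by positivity
    have := lt_of_lt_of_le hp (le_trans hfirst hkey)
    exact_mod_cast this
  exact ⟨hfirst, hkey, hpos⟩
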